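/- arXiv:1410.5410 — 3 statements merged into one kernel-verified Lean document; each statement's English description precedes it below -/
import Mathlib

section
/- For any z with 0 < z < 1, the second derivative of f(z) = z/\sqrt{a + z^b} is nonpositive when a = m/4 and b = 2^{m+1} for a positive integer m ≥ 1; that is, f is concave on (0,1). -/
open Real

/-- For `0 < z < 1`, the second derivative of `f(z) = z/√(a + z^b)` is nonpositive
when `a = m/4` and `b = 2^(m+1)` for a positive integer `m`; i.e., `f` is concave
on `(0,1)`. -/
theorem sign_alsh_concave (m : ℕ) (hm : 1 ≤ m) (a : ℝ) (ha : a = m / 4)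
    (f : ℝ → ℝ) (hf : ∀ z : ℝ, f z = z / Real.sqrt (a + z ^ (2 ^ (m + 1)))) :
    (∀ z ∈ Set.Ioo (0 : ℝ) 1, deriv (deriv f) z ≤ 0) ∧
    ConcaveOn ℝ (Set.Ioo (0 : ℝ) 1) f := by
  set n := 2 ^ (m + 1) with hn
  have hn4 : 4 ≤ n := by
    calc 4 = 2 ^ 2 := by norm_num
    _ ≤ 2 ^ (m + 1) := Nat.pow_le_pow_right (by norm_num) (by omega)
  have ha0 : (0 : ℝ) < a := by
    rw [ha]
    have : (1 : ℝ) ≤ (m : ℝ) := by exact_mod_cast hm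
    linarith
  have heven : Even n := ⟨2 ^ m, by rw [hn]; ring⟩
  have hpos : ∀ z : ℝ, 0 < a + z ^ n := fun z => by
    have := heven.pow_nonneg z
    linarith
  set s : ℝ → ℝ := fun z => Real.sqrt (a + z ^ n) with hs
  have hspos : ∀ z : ℝ, 0 < s z := fun z => Real.sqrt_pos.2 (hpos z)
  have hsq : ∀ z : ℝ, s z ^ 2 = a + z ^ n := fun z => Real.sq_sqrt (hpos z).le
  have hfe : f = fun z => z / s z := funext fun z => hf z
  set c : ℝ := 1 - (n : ℝ) / 2 with hc
  set F : ℝ → ℝ := fun z => (a + c * z ^ n) / s z ^ 3 with hF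
  set G : ℝ → ℝ := fun z =>
    (n : ℝ) * z ^ (n - 1) * (((n : ℝ) - 2) / 4 * z ^ n - ((n : ℝ) + 1) / 2 * a) / s z ^ 5
    with hG
  have hds : ∀ z : ℝ, HasDerivAt s ((n : ℝ) * z ^ (n - 1) / (2 * s z)) z := fun z => by
    exact ((hasDerivAt_pow n z).const_add a).sqrt (hpos z).ne'
  have hdf : ∀ z : ℝ, HasDerivAt f (F z) z := fun z => by
    have h1 : HasDerivAt f
        ((1 * s z - z * ((n : ℝ) * z ^ (n - 1) / (2 * s z))) / s z ^ 2) z := by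
      rw [hfe]
      exact (hasDerivAt_id z).div (hds z) (hspos z).ne'
    convert h1 using 1
    have hu0 : s z ≠ 0 := (hspos z).ne'
    have hu2 : s z ^ 2 = a + z ^ n := hsq z
    have hz1 : z * z ^ (n - 1) = z ^ n := by
      rw [← pow_succ']
      congr 1
      omega
    rw [hF]
    simp only
    rw [hc]
    field_simp
    linear_combination (-2 : ℝ) * hu2 + (n : ℝ) * hz1
  have hdF : ∀ z : ℝ, HasDerivAt F (G z) z := fun z => by
    have hnum : HasDerivAt (fun z : ℝ => a + c * z ^ n)
        (c * ((n : ℝ) * z ^ (n - 1))) z :=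
      ((hasDerivAt_pow n z).const_mul c).const_add a
    have hden : HasDerivAt (fun z : ℝ => s z ^ 3)
        (3 * s z ^ 2 * ((n : ℝ) * z ^ (n - 1) / (2 * s z))) z := by
      exact_mod_cast (hds z).pow 3
    have h1 := hnum.div hden (pow_ne_zero 3 (hspos z).ne')
    refine h1.congr_deriv (Eq.symm ?_)
    have hu0 : s z ≠ 0 := (hspos z).ne'
    have hu2 : s z ^ 2 = a + z ^ n := hsq z
    rw [hG]
    simp only
    rw [hc]
    field_simp
    linear_combination (z ^ (n - 1) * (8 * (n : ℝ) - 16)) * hu2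
  have hderiv1 : deriv f = F := funext fun z => (hdf z).deriv
  have hderiv2 : ∀ z : ℝ, deriv (deriv f) z = G z := fun z => by
    rw [hderiv1]; exact (hdF z).deriv
  -- the key arithmetic inequality: 2n ≤ m(n+1) + 4
  have hnat : 2 * n ≤ m * (n + 1) + 4 := by
    rcases eq_or_lt_of_le hm with h | h
    · have hm1 : m = 1 := h.symm
      subst hm1
      have : n = 4 := by norm_num [hn]
      omega
    · have h2 : 2 ≤ m := h
      calc 2 * n ≤ m * n := Nat.mul_le_mul_right n h2
      _ ≤ m * (n + 1) + 4 := by nlinarith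
  have hsign : ∀ z ∈ Set.Ioo (0 : ℝ) 1, deriv (deriv f) z ≤ 0 := by
    intro z hz
    obtain ⟨hz0, hz1⟩ := hz
    rw [hderiv2, hG]
    simp only
    apply div_nonpos_of_nonpos_of_nonneg
    · have hzn1 : (0 : ℝ) ≤ z ^ (n - 1) := le_of_lt (pow_pos hz0 _)
      have hzn : z ^ n ≤ 1 := pow_le_one₀ hz0.le hz1.le
      have hzn0 : (0 : ℝ) ≤ z ^ n := le_of_lt (pow_pos hz0 _)
      have hbr : ((n : ℝ) - 2) / 4 * z ^ n - ((n : ℝ) + 1) / 2 * a ≤ 0 := by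
        have hn2 : (0 : ℝ) ≤ (n : ℝ) - 2 := by
          have : (4 : ℝ) ≤ (n : ℝ) := by exact_mod_cast hn4
          linarith
        have h1 : ((n : ℝ) - 2) / 4 * z ^ n ≤ ((n : ℝ) - 2) / 4 := by nlinarith
        have h2 : ((n : ℝ) - 2) / 4 ≤ ((n : ℝ) + 1) / 2 * a := by
          rw [ha]
          have : (2 : ℝ) * n ≤ (m : ℝ) * ((n : ℝ) + 1) + 4 := by exact_mod_cast hnat
          nlinarith
        linarith
      have hnn : (0 : ℝ) ≤ (n : ℝ) * z ^ (n - 1) :=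
        mul_nonneg (Nat.cast_nonneg n) hzn1
      exact mul_nonpos_of_nonneg_of_nonpos hnn hbr
    · exact le_of_lt (pow_pos (hspos z) 5)
  refine ⟨hsign, ?_⟩
  have hdiff : Differentiable ℝ f := fun z => (hdf z).differentiableAt
  apply concaveOn_of_deriv2_nonpos (convex_Ioo 0 1)
  · exact hdiff.continuous.continuousOn
  · intro z _
    exact (hdf z).differentiableAt.differentiableWithinAt
  · intro z _
    rw [hderiv1]
    exact (hdF z).differentiableAt.differentiableWithinAt
  · intro z hz
    rw [interior_Ioo] at hz
    have h2 : deriv^[2] f = deriv (deriv f) := rfl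
    rw [h2]
    exact hsign z hz
end

section
/- Let Q(q) = [q; 0; …; 0] ∈ ℝ^{D+m} (appending m zeros) and P(x) = [x; 1/2 - ‖x‖²; …; 1/2 - ‖x‖^{2^m}]. If ‖q‖ = 1, then the cosine similarity satisfies ⟨Q(q), P(x)⟩/(‖Q(q)‖·‖P(x)‖) = ⟨q, x⟩/\sqrt{m/4 + ‖x‖^{2^{m+1}}}. -/
open Real RealInnerProductSpace Finset

/-- Sign-ALSH preprocessing transformation. -/
noncomputable def signALSH_P (m D : ℕ) (x : EuclideanSpace ℝ (Fin D)) :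
    EuclideanSpace ℝ (Fin (D + m)) :=
  WithLp.toLp 2 fun j => if h : (j : ℕ) < D then x ⟨j, h⟩
    else 1 / 2 - ‖x‖ ^ (2 ^ ((j : ℕ) - D + 1))

/-- Sign-ALSH query transformation: append `m` zeros. -/
noncomputable def signALSH_Q (m D : ℕ) (q : EuclideanSpace ℝ (Fin D)) :
    EuclideanSpace ℝ (Fin (D + m)) :=
  WithLp.toLp 2 fun j => if h : (j : ℕ) < D then q ⟨j, h⟩ else 0

lemma telescope (t : ℝ) (m : ℕ) :
    ∑ i ∈ Finset.range m, (1 / 2 - t ^ (2 ^ (i + 1))) ^ 2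
      = m / 4 - t ^ 2 + t ^ (2 ^ (m + 1)) := by
  induction m with
  | zero => simp
  | succ n ih =>
    rw [Finset.sum_range_succ, ih]
    have h1 : (t ^ (2 ^ (n + 1))) ^ 2 = t ^ (2 ^ (n + 2)) := by
      rw [← pow_mul, pow_succ 2 (n+1)]
    push_cast
    nlinarith [h1]


/-- If `‖q‖ = 1`, the cosine similarity of `Q(q)` and `P(x)` equals
`⟨q,x⟩ / √(m/4 + ‖x‖^(2^(m+1)))`. -/
theorem signALSH_cosine (m D : ℕ) (hm : 1 ≤ m)
    (q x : EuclideanSpace ℝ (Fin D)) (hq : ‖q‖ = 1) :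
    ⟪signALSH_Q m D q, signALSH_P m D x⟫ / (‖signALSH_Q m D q‖ * ‖signALSH_P m D x‖)
      = ⟪q, x⟫ / Real.sqrt (m / 4 + ‖x‖ ^ (2 ^ (m + 1))) := by
  have hinner : ⟪signALSH_Q m D q, signALSH_P m D x⟫ = ⟪q, x⟫ := by
    simp only [PiLp.inner_apply, RCLike.inner_apply, conj_trivial]
    rw [Fin.sum_univ_add]
    have h1 : ∀ i : Fin D, signALSH_Q m D q (Fin.castAdd m i) * signALSH_P m D x (Fin.castAdd m i)
        = q i * x i := by
      intro i
      simp [signALSH_Q, signALSH_P, Fin.castAdd, i.isLt]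
    have h2 : ∀ i : Fin m, signALSH_Q m D q (Fin.natAdd D i) * signALSH_P m D x (Fin.natAdd D i)
        = 0 := by
      intro i
      simp [signALSH_Q, signALSH_P, Fin.natAdd]
    simp only [mul_comm ((signALSH_P m D x).ofLp _), h1, h2]
    simp [mul_comm]
  have hQ : ‖signALSH_Q m D q‖ = 1 := by
    rw [← hq]
    rw [EuclideanSpace.norm_eq, EuclideanSpace.norm_eq]
    congr 1
    rw [Fin.sum_univ_add]
    have h2 : ∀ i : Fin m, ‖signALSH_Q m D q (Fin.natAdd D i)‖ ^ 2 = 0 := by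
      intro i; simp [signALSH_Q, Fin.natAdd]
    have h1 : ∀ i : Fin D, ‖signALSH_Q m D q (Fin.castAdd m i)‖ ^ 2 = ‖q i‖ ^ 2 := by
      intro i; simp [signALSH_Q, Fin.castAdd, i.isLt]
    rw [Finset.sum_congr rfl (fun i _ => h1 i), Finset.sum_congr rfl (fun i _ => h2 i)]
    simp
  have hP : ‖signALSH_P m D x‖ = Real.sqrt (m / 4 + ‖x‖ ^ (2 ^ (m + 1))) := by
    rw [EuclideanSpace.norm_eq]
    congr 1
    rw [Fin.sum_univ_add]
    have h1 : ∀ i : Fin D, ‖signALSH_P m D x (Fin.castAdd m i)‖ ^ 2 = ‖x i‖ ^ 2 := by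
      intro i; simp [signALSH_P, Fin.castAdd, i.isLt]
    have h2 : ∀ i : Fin m, ‖signALSH_P m D x (Fin.natAdd D i)‖ ^ 2
        = (1 / 2 - ‖x‖ ^ (2 ^ ((i : ℕ) + 1))) ^ 2 := by
      intro i; simp [signALSH_P, Fin.natAdd, sq_abs]
    have hx2 : ∑ i : Fin D, ‖x i‖ ^ 2 = ‖x‖ ^ 2 := by
      rw [EuclideanSpace.norm_eq, Real.sq_sqrt]
      positivity
    rw [Finset.sum_congr rfl (fun i _ => h1 i), Finset.sum_congr rfl (fun i _ => h2 i), hx2,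
      Fin.sum_univ_eq_sum_range (fun i => (1 / 2 - ‖x‖ ^ (2 ^ (i + 1))) ^ 2), telescope]
    ring
  rw [hinner, hQ, hP, one_mul]
end

section
/- Suppose ‖q‖ = 1, ‖x‖ ≤ 1, 0 < ⟨q,x⟩ ≤ cS₀, where c, S₀ > 0. Let z* = (m/2/(2^{m+1}-2))^{1/2^{m+1}} for a positive integer m ≥ 1. Then ⟨q,x⟩/\sqrt{m/4 + ‖x‖^{2^{m+1}}} ≤ min(cS₀, z*)/\sqrt{m/4 + (min(cS₀, z*))^{2^{m+1}}}. -/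
open Real RealInnerProductSpace

private lemma aux_key (A : ℝ) (hA : 0 < A) {a b : ℝ} (ha : 0 ≤ a) (hb : 0 ≤ b) (E : ℕ)
    (h : a ^ 2 * (A + b ^ E) ≤ b ^ 2 * (A + a ^ E)) :
    a / Real.sqrt (A + a ^ E) ≤ b / Real.sqrt (A + b ^ E) := by
  have h1 : 0 < A + a ^ E := by have := pow_nonneg ha E; linarith
  have h2 : 0 < A + b ^ E := by have := pow_nonneg hb E; linarith
  rw [div_le_div_iff₀ (Real.sqrt_pos.2 h1) (Real.sqrt_pos.2 h2)]
  have e1 : a * Real.sqrt (A + b ^ E) = Real.sqrt (a ^ 2 * (A + b ^ E)) := by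
    rw [Real.sqrt_mul (sq_nonneg a), Real.sqrt_sq ha]
  have e2 : b * Real.sqrt (A + a ^ E) = Real.sqrt (b ^ 2 * (A + a ^ E)) := by
    rw [Real.sqrt_mul (sq_nonneg b), Real.sqrt_sq hb]
  rw [e1, e2]
  exact Real.sqrt_le_sqrt h

private lemma aux_pow_sub (n : ℕ) {p s : ℝ} (hp : 0 ≤ p) (hps : p ≤ s) (hs : s ≤ 1) :
    s ^ n - p ^ n ≤ n * (s - p) := by
  induction n with
  | zero => simp
  | succ n ih =>
    have hpn : p ^ n ≤ s ^ n := pow_le_pow_left₀ hp hps n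
    have hsn : s ^ n ≤ 1 := pow_le_one₀ (hp.trans hps) hs
    have hpn0 : 0 ≤ p ^ n := pow_nonneg hp n
    have e1 : s ^ (n + 1) = s * s ^ n := by ring
    have e2 : p ^ (n + 1) = p * p ^ n := by ring
    push_cast
    nlinarith [mul_nonneg (sub_nonneg.2 hps) (sub_nonneg.2 hpn)]

private lemma aux_mono (n : ℕ) {p s : ℝ} (hp : 0 ≤ p) (hps : p ≤ s) (hs : s ≤ 1) :
    p ^ 2 * ((n : ℝ) / 2 + s ^ (n + 2)) ≤ s ^ 2 * ((n : ℝ) / 2 + p ^ (n + 2)) := by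
  have h := aux_pow_sub n hp hps hs
  have hs0 : 0 ≤ s := hp.trans hps
  have e1 : s ^ (n + 2) = s ^ n * s ^ 2 := by ring
  have e2 : p ^ (n + 2) = p ^ n * p ^ 2 := by ring
  have hps2 : 0 ≤ p ^ 2 * s ^ 2 := by positivity
  have key : p ^ 2 * s ^ 2 * (s ^ n - p ^ n) ≤ p ^ 2 * s ^ 2 * ((n : ℝ) * (s - p)) :=
    mul_le_mul_of_nonneg_left h hps2
  have h2 : 2 * (p ^ 2 * s ^ 2) ≤ s + p := by
    have hps1 : p * s ≤ 1 := mul_le_one₀ (hps.trans hs) hs0 hs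
    have h1 : p * s * (p * s) ≤ p * s * 1 :=
      mul_le_mul_of_nonneg_left hps1 (mul_nonneg hp hs0)
    nlinarith [sq_nonneg (p - s), mul_nonneg hp hs0]
  have hn0 : (0:ℝ) ≤ n := Nat.cast_nonneg n
  rw [e1, e2]
  nlinarith [mul_nonneg (mul_nonneg hn0 (sub_nonneg.2 hps)) (sub_nonneg.2 h2)]

private lemma aux_bern (k : ℕ) {u : ℝ} (hu : 0 ≤ u) : (k : ℝ) * u ≤ u ^ k + ((k : ℝ) - 1) := by
  have h := one_add_mul_le_pow (a := u - 1) (by linarith) k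
  have : (1 : ℝ) + (u - 1) = u := by ring
  rw [this] at h
  linarith

private lemma aux_scaled (E k : ℕ) (hE : E = 2 * k) (hk : 1 ≤ k) {s v : ℝ}
    (hs : 0 ≤ s) (hv : 0 ≤ v) (hv1 : v ≤ 1) (hcase : s ≤ v ∨ v = 1) :
    s ^ 2 * (((E : ℝ) - 2) / 2 + v ^ E) ≤ v ^ 2 * (((E : ℝ) - 2) / 2 + s ^ E) := by
  rcases hcase with hsv | rfl
  · -- monotone case
    obtain ⟨n, rfl⟩ : ∃ n, E = n + 2 := ⟨E - 2, by omega⟩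
    have := aux_mono n hs hsv hv1
    push_cast
    push_cast at this
    linarith
  · have hb := aux_bern k (u := s ^ 2) (by positivity)
    have hsE : s ^ E = (s ^ 2) ^ k := by rw [hE, pow_mul]
    have hEc : (E : ℝ) = 2 * k := by exact_mod_cast congrArg (Nat.cast (R := ℝ)) hE
    rw [hsE, hEc]
    have hk1 : (1:ℝ) ≤ k := by exact_mod_cast hk
    simp only [one_pow]
    linarith

/-- If `‖q‖ = 1`, `‖x‖ ≤ 1`, `0 < ⟨q,x⟩ ≤ cS₀`, then with
`z* = ((m/2)/(2^(m+1)-2))^(1/2^(m+1))`,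
`⟨q,x⟩/√(m/4 + ‖x‖^(2^(m+1))) ≤ min(cS₀,z*)/√(m/4 + min(cS₀,z*)^(2^(m+1)))`. -/
theorem signALSH_p2_bound {D : ℕ} (q x : EuclideanSpace ℝ (Fin D))
    (c S₀ : ℝ) (m : ℕ) (hm : 1 ≤ m)
    (hq : ‖q‖ = 1) (hx : ‖x‖ ≤ 1) (hc : 0 < c) (hS0 : 0 < S₀)
    (hqx0 : 0 < ⟪q, x⟫) (hqx : ⟪q, x⟫ ≤ c * S₀)
    (zstar : ℝ)
    (hzstar : zstar = ((m / 2 : ℝ) / (2 ^ (m + 1) - 2)) ^ ((1 : ℝ) / 2 ^ (m + 1))) :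
    ⟪q, x⟫ / Real.sqrt (m / 4 + ‖x‖ ^ (2 ^ (m + 1)))
      ≤ min (c * S₀) zstar / Real.sqrt (m / 4 + (min (c * S₀) zstar) ^ (2 ^ (m + 1))) := by
  set t : ℝ := ⟪q, x⟫ with ht
  set E : ℕ := 2 ^ (m + 1) with hEdef
  set A : ℝ := (m : ℝ) / 4 with hAdef
  set w : ℝ := min (c * S₀) zstar with hwdef
  have hm1 : (1:ℝ) ≤ m := by exact_mod_cast hm
  have hApos : 0 < A := by rw [hAdef]; linarith
  set P : ℝ := (2:ℝ) ^ (m + 1) with hPdef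
  have hP4 : (4:ℝ) ≤ P := by
    calc (4:ℝ) = 2 ^ 2 := by norm_num
    _ ≤ 2 ^ (m+1) := pow_le_pow_right₀ (by norm_num) (by omega)
  have hP2 : P - 2 ≠ 0 := by linarith
  have hbase_pos : (0:ℝ) < ((m : ℝ) / 2) / (P - 2) := by
    apply div_pos (by linarith) (by linarith)
  have hZpos : 0 < zstar := by
    rw [hzstar]; exact Real.rpow_pos_of_pos hbase_pos _
  have hEc : ((E : ℕ) : ℝ) = P := by rw [hEdef, hPdef]; push_cast; ring
  have hZE : zstar ^ E = ((m : ℝ) / 2) / (P - 2) := by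
    rw [hzstar, ← Real.rpow_natCast (_ ^ _) E, ← Real.rpow_mul hbase_pos.le, hEc,
      one_div, inv_mul_cancel₀ (by linarith), Real.rpow_one]
  set B : ℝ := ((m : ℝ) / 2) / (P - 2) with hBdef
  have hBpos : 0 < B := hbase_pos
  have hAB : A = B * (((E : ℝ) - 2) / 2) := by
    rw [hAdef, hBdef, hEc]; field_simp; ring
  have hwpos : 0 < w := lt_min (by positivity) hZpos
  have hwZ : w ≤ zstar := min_le_right _ _
  -- main polynomial inequality
  have main : t ^ 2 * (A + w ^ E) ≤ w ^ 2 * (A + t ^ E) := by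
    set s : ℝ := t / zstar with hsdef
    set v : ℝ := w / zstar with hvdef
    have hts : t = s * zstar := by rw [hsdef, div_mul_cancel₀ _ hZpos.ne']
    have hws : w = v * zstar := by rw [hvdef, div_mul_cancel₀ _ hZpos.ne']
    have hs0 : 0 ≤ s := by positivity
    have hv0 : 0 ≤ v := by positivity
    have hv1 : v ≤ 1 := by rw [hvdef]; exact div_le_one_of_le₀ hwZ hZpos.le
    have hcase : s ≤ v ∨ v = 1 := by
      rcases le_or_gt t w with h | h
      · left; rw [hsdef, hvdef]; gcongr
      · right
        have : w = zstar := by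
          rcases min_cases (c * S₀) zstar with ⟨h1, h2⟩ | ⟨h1, h2⟩
          · exfalso; rw [hwdef, h1] at h; linarith
          · rw [hwdef, h1]
        rw [hvdef, this, div_self hZpos.ne']
    have hsc := aux_scaled E (2 ^ m) (by rw [hEdef]; ring) (Nat.one_le_two_pow) hs0 hv0 hv1 hcase
    have := mul_le_mul_of_nonneg_left hsc (by positivity : (0:ℝ) ≤ zstar ^ 2 * B)
    rw [hts, hws, hAB]
    have hZEe : zstar ^ E = B := hZE
    calc (s * zstar) ^ 2 * (B * (((E:ℝ) - 2) / 2) + (v * zstar) ^ E)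
        = zstar ^ 2 * B * (s ^ 2 * (((E : ℝ) - 2) / 2 + v ^ E)) := by
          rw [mul_pow, mul_pow, hZEe]; ring
      _ ≤ zstar ^ 2 * B * (v ^ 2 * (((E : ℝ) - 2) / 2 + s ^ E)) := this
      _ = (v * zstar) ^ 2 * (B * (((E:ℝ) - 2) / 2) + (s * zstar) ^ E) := by
          rw [mul_pow, mul_pow, hZEe]; ring
  -- step 1 : t ≤ ‖x‖
  have htx : t ≤ ‖x‖ := by
    have := real_inner_le_norm q x
    rw [hq, one_mul] at this
    exact this
  have hstep1 : t / Real.sqrt (A + ‖x‖ ^ E) ≤ t / Real.sqrt (A + t ^ E) := by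
    apply div_le_div_of_nonneg_left hqx0.le
    · apply Real.sqrt_pos.2; have := pow_nonneg hqx0.le E; rw [ht] at this ⊢; linarith
    · apply Real.sqrt_le_sqrt
      have : t ^ E ≤ ‖x‖ ^ E := pow_le_pow_left₀ hqx0.le htx E
      linarith
  calc t / Real.sqrt (A + ‖x‖ ^ E) ≤ t / Real.sqrt (A + t ^ E) := hstep1
    _ ≤ w / Real.sqrt (A + w ^ E) := aux_key A hApos hqx0.le hwpos.le E main
end
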